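/- Work in the field ℚ(δ). For n ≥ m ≥ 0 with m ≡ n (mod 2), let W(n,m) be the set of sequences (h_0, h_1, …, h_n) of nonnegative integers with h_0 = 0, h_n = m, and |h_j − h_{j−1}| = 1 for all 1 ≤ j ≤ n. Then Π_{(h_j) ∈ W(n,m)} Π_{j : h_j = h_{j−1} − 1} [h_{j−1}+1]/[h_{j−1}] = Π_{j=1}^{(n−m)/2} ( [m+j+1]/[j] )^{d(n, m+2j)}, where d(n,t) = binom(n, (n−t)/2) − binom(n, (n−t)/2 − 1). -/
import Mathlib

/-- The quantum numbers `[n]` in `ℚ(δ)`, with `δ = X`: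
`[0] = 0`, `[1] = 1`, `[n+1] = δ·[n] − [n−1]`. -/
noncomputable def q : ℕ → RatFunc ℚ
  | 0 => 0
  | 1 => 1
  | n + 2 => RatFunc.X * q (n + 1) - q n

/-- The quantum factorial `[n]! = [n][n−1]⋯[1]`. -/
noncomputable def qfact : ℕ → RatFunc ℚ
  | 0 => 1
  | n + 1 => q (n + 1) * qfact n

/-- The quantum binomial `[n choose k]_q = [n]!/([k]!·[n−k]!)`, zero for `k > n`. -/
noncomputable def qbinom (n k : ℕ) : RatFunc ℚ :=
  if k ≤ n then qfact n / (qfact k * qfact (n - k)) else 0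

/-- `d(n,t) = binom(n,(n−t)/2) − binom(n,(n−t)/2−1)` (with `binom(n,−1) = 0`),
the dimension of the Temperley–Lieb cell module `Δ_n(t)`. -/
def dExp (n t : ℕ) : ℕ :=
  n.choose ((n - t) / 2) - (if (n - t) / 2 = 0 then 0 else n.choose ((n - t) / 2 - 1))

/-! ### The quantum numbers are nonzero -/

noncomputable def qp : ℕ → Polynomial ℚ
  | 0 => 0
  | 1 => 1
  | n + 2 => Polynomial.X * qp (n + 1) - qp n

lemma q_eq (n : ℕ) : q n = algebraMap (Polynomial ℚ) (RatFunc ℚ) (qp n) := by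
  induction n using Nat.strong_induction_on with
  | _ n ih =>
    match n with
    | 0 => simp [q, qp]
    | 1 => simp [q, qp]
    | n + 2 =>
      rw [q, qp, ih (n + 1) (by omega), ih n (by omega)]
      simp [RatFunc.algebraMap_X, map_sub, map_mul]

lemma qp_eval (n : ℕ) : (qp n).eval 2 = n := by
  induction n using Nat.strong_induction_on with
  | _ n ih =>
    match n with
    | 0 => simp [qp]
    | 1 => simp [qp]
    | n + 2 =>
      rw [qp]
      simp only [Polynomial.eval_sub, Polynomial.eval_mul, Polynomial.eval_X,
        ih (n + 1) (by omega), ih n (by omega)]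
      push_cast
      ring

lemma q_ne_zero {n : ℕ} (hn : n ≠ 0) : q n ≠ 0 := by
  rw [q_eq]
  apply RatFunc.algebraMap_ne_zero
  intro h
  have := qp_eval n
  rw [h] at this
  simp at this
  exact_mod_cast hn (by exact_mod_cast this.symm)

/-! ### Walks -/

def W (n m : ℕ) : Set (Fin (n + 1) → ℕ) :=
  { h | h 0 = 0 ∧ h (Fin.last n) = m ∧
      ∀ j : Fin n, h j.succ = h j.castSucc + 1 ∨ h j.castSucc = h j.succ + 1 }

lemma W_bound {n m : ℕ} {h : Fin (n + 1) → ℕ} (hh : h ∈ W n m) :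
    ∀ i : Fin (n + 1), h i ≤ i.val ∧ h i % 2 = i.val % 2 := by
  obtain ⟨h0, -, hstep⟩ := hh
  intro i
  induction i using Fin.induction with
  | zero => simp [h0]
  | succ j ih =>
    simp only [Fin.coe_castSucc, Fin.val_succ] at ih ⊢
    rcases hstep j with hs | hs <;> omega

lemma W_empty {n m : ℕ} (hnm : n < m ∨ m % 2 ≠ n % 2) : W n m = ∅ := by
  ext h
  simp only [Set.mem_empty_iff_false, iff_false]
  intro hh
  have := W_bound hh (Fin.last n)
  rw [hh.2.1] at this
  simp [Fin.val_last] at this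
  omega

lemma W_finite (n m : ℕ) : (W n m).Finite := by
  apply Set.Finite.subset (Set.finite_Icc (fun _ : Fin (n + 1) => 0) (fun _ => n))
  intro h hh
  rw [Set.mem_Icc]
  constructor <;> intro i
  · exact Nat.zero_le _
  · exact le_trans (W_bound hh i).1 (Fin.is_le i)

lemma W_zero : W 0 0 = {fun _ => 0} := by
  ext h
  simp only [W, Set.mem_setOf_eq, Set.mem_singleton_iff]
  constructor
  · rintro ⟨h0, -, -⟩
    funext i
    rw [Fin.fin_one_eq_zero i, h0]
  · rintro rfl
    refine ⟨rfl, rfl, fun j => j.elim0⟩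

lemma W_self (n : ℕ) : W n n = {fun i => i.val} := by
  ext h
  constructor
  · intro hh
    have hb := W_bound hh
    obtain ⟨h0, hl, hstep⟩ := hh
    have key : ∀ i : Fin (n + 1), h i = i.val := by
      intro i
      induction i using Fin.reverseInduction with
      | last => rw [hl]; simp
      | cast j ih =>
        rcases hstep j with hs | hs
        · have := (hb j.castSucc).1
          rw [ih, Fin.val_succ] at hs
          simp only [Fin.coe_castSucc] at *
          omega
        · have := (hb j.castSucc).1
          rw [ih, Fin.val_succ] at hs
          simp only [Fin.coe_castSucc] at *
          omega
    exact funext key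
  · rintro rfl
    refine ⟨rfl, rfl, fun j => Or.inl ?_⟩
    simp

noncomputable def Wf (n m : ℕ) : Finset (Fin (n + 1) → ℕ) := (W_finite n m).toFinset

lemma mem_Wf {n m : ℕ} {h : Fin (n + 1) → ℕ} : h ∈ Wf n m ↔ h ∈ W n m :=
  Set.Finite.mem_toFinset _

noncomputable def F (n : ℕ) (h : Fin (n + 1) → ℕ) : RatFunc ℚ :=
  ∏ j : Fin n, if h j.castSucc = h j.succ + 1 then q (h j.castSucc + 1) / q (h j.castSucc) else 1

lemma snoc_mem_W {n m v : ℕ} {g : Fin (n + 1) → ℕ} (hg : g ∈ W n m)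
    (hv : m + 1 = v ∨ m = v + 1) : Fin.snoc g v ∈ W (n + 1) v := by
  obtain ⟨h0, hl, hstep⟩ := hg
  refine ⟨?_, Fin.snoc_last _ _, ?_⟩
  · have : (0 : Fin (n + 2)) = Fin.castSucc 0 := rfl
    rw [this, Fin.snoc_castSucc, h0]
  · intro j
    induction j using Fin.lastCases with
    | last =>
      rw [Fin.succ_last, Fin.snoc_last, Fin.snoc_castSucc, hl]
      tauto
    | cast i =>
      rw [Fin.succ_castSucc, Fin.snoc_castSucc, Fin.snoc_castSucc]
      exact hstep i

lemma init_mem_W {n v : ℕ} {h : Fin (n + 2) → ℕ} (hh : h ∈ W (n + 1) v) :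
    Fin.init h ∈ W n (v + 1) ∨ (Fin.init h ∈ W n (v - 1) ∧ 1 ≤ v) := by
  obtain ⟨h0, hl, hstep⟩ := hh
  have hi0 : Fin.init h 0 = 0 := h0
  have hsteps : ∀ i : Fin n,
      Fin.init h i.succ = Fin.init h i.castSucc + 1 ∨
      Fin.init h i.castSucc = Fin.init h i.succ + 1 := by
    intro i
    have := hstep i.castSucc
    rw [Fin.succ_castSucc] at this
    exact this
  have hlaststep := hstep (Fin.last n)
  rw [Fin.succ_last, hl] at hlaststep
  rcases hlaststep with hs | hs
  · right
    have hv : 1 ≤ v := by omega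
    refine ⟨⟨hi0, ?_, hsteps⟩, hv⟩
    show h (Fin.castSucc (Fin.last n)) = v - 1
    omega
  · left
    exact ⟨hi0, hs, hsteps⟩

lemma Wf_succ (n m : ℕ) :
    Wf (n + 1) (m + 1) = (Wf n m ∪ Wf n (m + 2)).image (fun g => Fin.snoc g (m + 1)) := by
  ext h
  simp only [Finset.mem_image, Finset.mem_union, mem_Wf]
  constructor
  · intro hh
    refine ⟨Fin.init h, ?_, ?_⟩
    · rcases init_mem_W hh with h1 | ⟨h1, -⟩
      · exact Or.inr h1
      · exact Or.inl (by simpa using h1)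
    · rw [← hh.2.1]
      exact Fin.snoc_init_self h
  · rintro ⟨g, hg | hg, rfl⟩
    · exact snoc_mem_W hg (Or.inl rfl)
    · exact snoc_mem_W hg (Or.inr rfl)

lemma Wf_zero (n : ℕ) :
    Wf (n + 1) 0 = (Wf n 1).image (fun g => Fin.snoc g 0) := by
  ext h
  simp only [Finset.mem_image, mem_Wf]
  constructor
  · intro hh
    refine ⟨Fin.init h, ?_, ?_⟩
    · rcases init_mem_W hh with h1 | ⟨-, h1⟩
      · exact h1
      · omega
    · rw [← hh.2.1]
      exact Fin.snoc_init_self h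
  · rintro ⟨g, hg, rfl⟩
    exact snoc_mem_W hg (Or.inr rfl)

lemma snoc_injOn {n v : ℕ} (s : Finset (Fin (n + 1) → ℕ)) :
    Set.InjOn (fun g : Fin (n + 1) → ℕ => (Fin.snoc g v : Fin (n + 2) → ℕ))
      (s : Set (Fin (n + 1) → ℕ)) := by
  intro x _ y _ hxy
  have := congrArg Fin.init hxy
  simpa [Fin.init_snoc] using this

lemma Wf_disj (n m : ℕ) : Disjoint (Wf n m) (Wf n (m + 2)) := by
  rw [Finset.disjoint_left]
  intro g hg hg'
  rw [mem_Wf] at hg hg'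
  have := hg.2.1
  have := hg'.2.1
  omega

lemma F_snoc (n v : ℕ) (g : Fin (n + 1) → ℕ) :
    F (n + 1) (Fin.snoc g v) =
      F n g * (if g (Fin.last n) = v + 1 then q (v + 2) / q (v + 1) else 1) := by
  rw [F, Fin.prod_univ_castSucc]
  congr 1
  · apply Finset.prod_congr rfl
    intro i _
    rw [Fin.succ_castSucc, Fin.snoc_castSucc, Fin.snoc_castSucc]
  · rw [Fin.succ_last, Fin.snoc_last, Fin.snoc_castSucc]
    split_ifs with hc
    · rw [hc]
    · rfl

lemma prod_Wf_succ (n m : ℕ) :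
    ∏ h ∈ Wf (n + 1) (m + 1), F (n + 1) h =
      (∏ g ∈ Wf n m, F n g) *
        ((∏ g ∈ Wf n (m + 2), F n g) * (q (m + 3) / q (m + 2)) ^ (Wf n (m + 2)).card) := by
  rw [Wf_succ, Finset.prod_image (snoc_injOn _), Finset.prod_union (Wf_disj n m)]
  congr 1
  · rw [Finset.prod_congr rfl]
    intro g hg
    rw [F_snoc, if_neg, mul_one]
    rw [mem_Wf] at hg
    have := hg.2.1
    omega
  · rw [← Finset.prod_const, ← Finset.prod_mul_distrib]
    apply Finset.prod_congr rfl
    intro g hg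
    rw [F_snoc, if_pos]
    rw [mem_Wf] at hg
    exact hg.2.1

lemma prod_Wf_zero (n : ℕ) :
    ∏ h ∈ Wf (n + 1) 0, F (n + 1) h =
      (∏ g ∈ Wf n 1, F n g) * (q 2 / q 1) ^ (Wf n 1).card := by
  rw [Wf_zero, Finset.prod_image (snoc_injOn _), ← Finset.prod_const,
    ← Finset.prod_mul_distrib]
  apply Finset.prod_congr rfl
  intro g hg
  rw [F_snoc, if_pos]
  rw [mem_Wf] at hg
  exact hg.2.1

lemma card_Wf_succ (n m : ℕ) :
    (Wf (n + 1) (m + 1)).card = (Wf n m).card + (Wf n (m + 2)).card := by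
  rw [Wf_succ, Finset.card_image_of_injOn (snoc_injOn _),
    Finset.card_union_of_disjoint (Wf_disj n m)]

lemma card_Wf_zero (n : ℕ) : (Wf (n + 1) 0).card = (Wf n 1).card := by
  rw [Wf_zero, Finset.card_image_of_injOn (snoc_injOn _)]

lemma Wf_empty {n t : ℕ} (h : n < t) : Wf n t = ∅ := by
  ext g
  rw [mem_Wf, W_empty (Or.inl h)]
  simp

/-! ### dExp lemmas -/

lemma dExp_self (n : ℕ) : dExp n n = 1 := by
  simp [dExp]

lemma dExp_pascal (n t : ℕ) (h1 : 1 ≤ t) (h2 : t + 1 ≤ n) (hp : t % 2 = (n + 1) % 2) :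
    dExp (n + 1) t = dExp n (t - 1) + dExp n (t + 1) := by
  obtain ⟨k, hk⟩ : ∃ k, n + 1 - t = 2 * (k + 1) := ⟨(n + 1 - t) / 2 - 1, by omega⟩
  have e0 : (n + 1 - t) / 2 = k + 1 := by omega
  have e1 : (n - (t - 1)) / 2 = k + 1 := by omega
  have e2 : (n - (t + 1)) / 2 = k := by omega
  rw [dExp, dExp, dExp, e0, e1, e2]
  have p1 : (n + 1).choose (k + 1) = n.choose k + n.choose (k + 1) := Nat.choose_succ_succ n k
  cases k with
  | zero =>
    simp [Nat.choose_one_right]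
    omega
  | succ k' =>
    have p2 : (n + 1).choose (k' + 1) = n.choose k' + n.choose (k' + 1) :=
      Nat.choose_succ_succ n k'
    have m1 : n.choose (k' + 1) ≤ n.choose (k' + 1 + 1) :=
      Nat.choose_le_succ_of_lt_half_left (by omega)
    have m2 : n.choose k' ≤ n.choose (k' + 1) :=
      Nat.choose_le_succ_of_lt_half_left (by omega)
    simp only [Nat.add_sub_cancel, if_neg (Nat.succ_ne_zero _)]
    omega

lemma dExp_pascal_zero (n : ℕ) (h1 : 1 ≤ n) (hp : 1 % 2 = n % 2) :
    dExp (n + 1) 0 = dExp n 1 := by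
  match n, h1 with
  | 1, _ => decide
  | n + 2, _ =>
    obtain ⟨l, rfl⟩ : ∃ l, n = 2 * l + 1 := ⟨n / 2, by omega⟩
    simp only [show 2 * l + 1 + 2 = 2 * l + 3 from by omega,
      show 2 * l + 1 + 2 + 1 = 2 * l + 3 + 1 from by omega]
    have e0 : (2 * l + 3 + 1 - 0) / 2 = l + 2 := by omega
    have e1 : (2 * l + 3 - 1) / 2 = l + 1 := by omega
    rw [dExp, dExp, e0, e1]
    have p1 : (2 * l + 3 + 1).choose (l + 2) =
        (2 * l + 3).choose (l + 1) + (2 * l + 3).choose (l + 2) := Nat.choose_succ_succ _ _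
    have p2 : (2 * l + 3 + 1).choose (l + 1) =
        (2 * l + 3).choose l + (2 * l + 3).choose (l + 1) := Nat.choose_succ_succ _ _
    have hs : (2 * l + 3).choose (l + 2) = (2 * l + 3).choose (l + 1) := by
      have h := Nat.choose_symm (n := 2 * l + 3) (k := l + 2) (by omega)
      rw [show 2 * l + 3 - (l + 2) = l + 1 by omega] at h
      exact h.symm
    have m1 : (2 * l + 3).choose l ≤ (2 * l + 3).choose (l + 1) :=
      Nat.choose_le_succ_of_lt_half_left (by omega)
    rw [if_neg (by omega : ¬ l + 2 = 0), if_neg (by omega : ¬ l + 1 = 0)]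
    simp only [show l + 2 - 1 = l + 1 from rfl, show l + 1 - 1 = l from rfl]
    omega

/-! ### Counting walks -/

lemma card_Wf (n : ℕ) : ∀ t : ℕ, t ≤ n → t % 2 = n % 2 → (Wf n t).card = dExp n t := by
  induction n with
  | zero =>
    intro t ht _
    interval_cases t
    have hW : Wf 0 0 = {fun _ => 0} := by
      ext h
      rw [mem_Wf, W_zero]
      simp
    rw [hW]
    simp [dExp]
  | succ n ih =>
    intro t ht hp
    cases t with
    | zero =>
      have hn : 1 ≤ n := by omega
      rw [card_Wf_zero, ih 1 hn (by omega), dExp_pascal_zero n hn (by omega)]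
    | succ m =>
      rw [card_Wf_succ]
      by_cases hb : m + 2 ≤ n
      · rw [ih m (by omega) (by omega), ih (m + 2) (by omega) (by omega),
          dExp_pascal n (m + 1) (by omega) (by omega) (by omega)]
        simp only [Nat.add_sub_cancel]
      · have hm : m = n := by omega
        subst hm
        rw [show Wf m (m + 2) = ∅ from Wf_empty (by omega), ih m le_rfl rfl]
        simp [dExp_self]

/-! ### The telescoping identity -/

open Finset in
lemma teleT {α : Type*} [Field α] (K : ℕ) (x y : ℕ → α) (B : ℕ → ℕ) (hB : B K = 0)
    (hx : ∀ i, x i ≠ 0) :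
    (∏ i ∈ range K, (x i / y i) ^ B i) *
      ((∏ i ∈ range K, (x (i + 2) / y i) ^ B (i + 1)) * (x 1 / x 0) ^ B 0) =
      ∏ i ∈ range K, (x (i + 1) / y i) ^ (B i + B (i + 1)) := by
  have hpair : ∀ a b : α, a ≠ 0 → b ≠ 0 → ∀ e : ℕ, (a / b) ^ e * (b / a) ^ e = 1 := by
    intro a b ha hb e
    rw [← mul_pow, div_mul_div_comm, mul_comm a b, div_self (mul_ne_zero hb ha), one_pow]
  have key : ∀ i, (x (i + 1) / y i) ^ (B i + B (i + 1)) =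
      ((x i / y i) ^ B i * (x (i + 2) / y i) ^ B (i + 1)) *
        ((x (i + 1) / x i) ^ B i * (x (i + 1) / x (i + 2)) ^ B (i + 1)) := by
    intro i
    have e1 : x i / y i * (x (i + 1) / x i) = x (i + 1) / y i := by
      rw [div_mul_div_comm, mul_comm (y i) (x i), mul_div_mul_left _ _ (hx i)]
    have e2 : x (i + 2) / y i * (x (i + 1) / x (i + 2)) = x (i + 1) / y i := by
      rw [div_mul_div_comm, mul_comm (x (i + 2)) (x (i + 1)),
        mul_div_mul_right _ _ (hx (i + 2))]
    rw [pow_add]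
    nth_rewrite 1 [← e1]
    nth_rewrite 1 [← e2]
    rw [mul_pow, mul_pow]
    ring
  have expand : ∏ i ∈ range K, (x (i + 1) / y i) ^ (B i + B (i + 1)) =
      ((∏ i ∈ range K, (x i / y i) ^ B i) * (∏ i ∈ range K, (x (i + 2) / y i) ^ B (i + 1))) *
        ((∏ i ∈ range K, (x (i + 1) / x i) ^ B i) *
          (∏ i ∈ range K, (x (i + 1) / x (i + 2)) ^ B (i + 1))) := by
    rw [← Finset.prod_mul_distrib, ← Finset.prod_mul_distrib, ← Finset.prod_mul_distrib]
    exact Finset.prod_congr rfl fun i _ => key i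
  have h2 : (∏ i ∈ range K, (x i / x (i + 1)) ^ B i) =
      (∏ i ∈ range K, (x (i + 1) / x (i + 2)) ^ B (i + 1)) * (x 0 / x 1) ^ B 0 := by
    have e := Finset.prod_range_succ' (fun i => (x i / x (i + 1)) ^ B i) K
    rw [Finset.prod_range_succ, hB, pow_zero, mul_one] at e
    exact e
  have tele : (∏ i ∈ range K, (x (i + 1) / x i) ^ B i) *
      (∏ i ∈ range K, (x (i + 1) / x (i + 2)) ^ B (i + 1)) = (x 1 / x 0) ^ B 0 := by
    have h3 : (∏ i ∈ range K, (x (i + 1) / x i) ^ B i) *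
        (∏ i ∈ range K, (x i / x (i + 1)) ^ B i) = 1 := by
      rw [← Finset.prod_mul_distrib]
      exact Finset.prod_eq_one fun i _ => hpair _ _ (hx _) (hx _) _
    apply mul_right_cancel₀ (pow_ne_zero (B 0) (div_ne_zero (hx 0) (hx 1)))
    rw [mul_assoc, ← h2, h3, hpair _ _ (hx 1) (hx 0)]
  rw [expand, tele]
  ring

lemma cv (f : ℕ → RatFunc ℚ) (K : ℕ) :
    ∏ j ∈ Finset.Icc 1 K, f j = ∏ i ∈ Finset.range K, f (i + 1) := by
  rw [← Finset.Ico_add_one_right_eq_Icc, Finset.prod_Ico_eq_prod_range]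
  exact Finset.prod_congr (by simp) fun i _ => by rw [add_comm]

/-! ### Main induction -/

lemma main_aux (n : ℕ) : ∀ m : ℕ, m ≤ n → m % 2 = n % 2 →
    ∏ h ∈ Wf n m, F n h =
      ∏ j ∈ Finset.Icc 1 ((n - m) / 2), (q (m + j + 1) / q j) ^ dExp n (m + 2 * j) := by
  induction n with
  | zero =>
    intro m hm _
    interval_cases m
    have hW : Wf 0 0 = {fun _ => 0} := by
      ext h
      rw [mem_Wf, W_zero]
      simp
    rw [hW, Finset.prod_singleton]
    simp [F]
  | succ n ih =>
    intro m hm hpar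
    by_cases htop : m = n + 1
    · subst htop
      have hW : Wf (n + 1) (n + 1) = {fun i : Fin (n + 2) => (i : ℕ)} := by
        ext h
        rw [mem_Wf, W_self]
        simp
      rw [hW, Finset.prod_singleton,
        show Finset.Icc 1 ((n + 1 - (n + 1)) / 2) = ∅ from by
          rw [show (n + 1 - (n + 1)) / 2 = 0 from by omega]
          exact Finset.Icc_eq_empty (by omega),
        Finset.prod_empty, F]
      apply Finset.prod_eq_one
      intro j _
      rw [if_neg]
      simp only [Fin.coe_castSucc, Fin.val_succ]
      omega
    · have hm1 : m + 2 ≤ n + 1 := by omega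
      cases m with
      | zero =>
        have hn : 1 ≤ n := by omega
        rw [prod_Wf_zero, card_Wf n 1 hn (by omega), ih 1 hn (by omega)]
        set K := (n + 1) / 2 with hKdef
        have hK : n + 1 = 2 * K := by omega
        set B : ℕ → ℕ := fun i => if i < K then dExp n (2 * i + 1) else 0 with hBdef
        have hT := teleT K (fun i => q (i + 1)) (fun i => q (i + 1)) B
          (by simp [hBdef]) (fun i => q_ne_zero (by omega))
        have Etriv : (∏ i ∈ Finset.range K, ((fun i => q (i + 1)) i / (fun i => q (i + 1)) i) ^ B i) = 1 :=
          Finset.prod_eq_one fun i _ => by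
            rw [div_self (q_ne_zero (by omega)), one_pow]
        rw [Etriv, one_mul] at hT
        have E2 : ∏ j ∈ Finset.Icc 1 ((n - 1) / 2), (q (1 + j + 1) / q j) ^ dExp n (1 + 2 * j)
            = ∏ i ∈ Finset.range K, (q (i + 2 + 1) / q (i + 1)) ^ B (i + 1) := by
          rw [cv, show (n - 1) / 2 = K - 1 from by omega]
          have hKs : K = K - 1 + 1 := by omega
          rw [hKs, Finset.prod_range_succ, show K - 1 + 1 = K from by omega]
          rw [show B K = 0 from by simp [hBdef], pow_zero, mul_one]
          apply Finset.prod_congr rfl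
          intro i hi
          rw [Finset.mem_range] at hi
          rw [show B (i + 1) = dExp n (2 * (i + 1) + 1) from by
            rw [hBdef]; exact if_pos (by omega)]
          rw [show 1 + (i + 1) + 1 = i + 2 + 1 from by omega,
            show 1 + 2 * (i + 1) = 2 * (i + 1) + 1 from by omega]
        have E3 : (q 2 / q 1) ^ dExp n 1
            = ((fun i => q (i + 1)) 1 / (fun i => q (i + 1)) 0) ^ B 0 := by
          simp only
          rw [show B 0 = dExp n 1 from by rw [hBdef]; exact if_pos (by omega)]
        have E4 : ∏ j ∈ Finset.Icc 1 ((n + 1 - 0) / 2), (q (0 + j + 1) / q j) ^ dExp (n + 1) (0 + 2 * j)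
            = ∏ i ∈ Finset.range K, (q (i + 1 + 1) / q (i + 1)) ^ (B i + B (i + 1)) := by
          rw [cv, show (n + 1 - 0) / 2 = K from by omega]
          apply Finset.prod_congr rfl
          intro i hi
          rw [Finset.mem_range] at hi
          rw [show 0 + (i + 1) + 1 = i + 1 + 1 from by omega]
          congr 1
          by_cases hlast : i + 1 < K
          · rw [show B i = dExp n (2 * i + 1) from by rw [hBdef]; exact if_pos (by omega),
              show B (i + 1) = dExp n (2 * (i + 1) + 1) from by rw [hBdef]; exact if_pos hlast]
            have hP := dExp_pascal n (2 * i + 2) (by omega) (by omega) (by omega)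
            rw [show 0 + 2 * (i + 1) = 2 * i + 2 from by omega, hP,
              show 2 * i + 2 - 1 = 2 * i + 1 from by omega,
              show 2 * i + 2 + 1 = 2 * (i + 1) + 1 from by omega]
          · have hi' : i + 1 = K := by omega
            rw [show B i = dExp n (2 * i + 1) from by rw [hBdef]; exact if_pos (by omega),
              show B (i + 1) = 0 from by rw [hBdef]; exact if_neg (by omega),
              show 2 * i + 1 = n from by omega, dExp_self,
              show 0 + 2 * (i + 1) = n + 1 from by omega, dExp_self]
        rw [E2, E3, E4]
        exact hT
      | succ m' =>
        have hm2 : m' + 2 ≤ n := by omega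
        rw [prod_Wf_succ, card_Wf n (m' + 2) hm2 (by omega),
          ih m' (by omega) (by omega), ih (m' + 2) hm2 (by omega)]
        set K := (n - m') / 2 with hKdef
        have hK : n - m' = 2 * K := by omega
        have hK1 : 1 ≤ K := by omega
        set B : ℕ → ℕ := fun i => if i < K then dExp n (m' + 2 * i + 2) else 0 with hBdef
        have hT := teleT K (fun i => q (m' + i + 2)) (fun i => q (i + 1)) B
          (by simp [hBdef]) (fun i => q_ne_zero (by omega))
        have E1 : ∏ j ∈ Finset.Icc 1 ((n - m') / 2), (q (m' + j + 1) / q j) ^ dExp n (m' + 2 * j)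
            = ∏ i ∈ Finset.range K, (q (m' + i + 2) / q (i + 1)) ^ B i := by
          rw [cv]
          apply Finset.prod_congr rfl
          intro i hi
          rw [Finset.mem_range] at hi
          rw [show B i = dExp n (m' + 2 * i + 2) from by rw [hBdef]; exact if_pos hi,
            show m' + (i + 1) + 1 = m' + i + 2 from by omega,
            show m' + 2 * (i + 1) = m' + 2 * i + 2 from by omega]
        have E2 : ∏ j ∈ Finset.Icc 1 ((n - (m' + 2)) / 2),
              (q (m' + 2 + j + 1) / q j) ^ dExp n (m' + 2 + 2 * j)
            = ∏ i ∈ Finset.range K, (q (m' + (i + 2) + 2) / q (i + 1)) ^ B (i + 1) := by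
          rw [cv, show (n - (m' + 2)) / 2 = K - 1 from by omega]
          have hKs : K = K - 1 + 1 := by omega
          rw [hKs, Finset.prod_range_succ, show K - 1 + 1 = K from by omega]
          rw [show B K = 0 from by simp [hBdef], pow_zero, mul_one]
          apply Finset.prod_congr rfl
          intro i hi
          rw [Finset.mem_range] at hi
          rw [show B (i + 1) = dExp n (m' + 2 * (i + 1) + 2) from by
            rw [hBdef]; exact if_pos (by omega)]
          rw [show m' + 2 + (i + 1) + 1 = m' + (i + 2) + 2 from by omega,
            show m' + 2 + 2 * (i + 1) = m' + 2 * (i + 1) + 2 from by omega]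
        have E3 : (q (m' + 3) / q (m' + 2)) ^ (dExp n (m' + 2))
            = ((fun i => q (m' + i + 2)) 1 / (fun i => q (m' + i + 2)) 0) ^ B 0 := by
          simp only
          rw [show B 0 = dExp n (m' + 2 * 0 + 2) from by rw [hBdef]; exact if_pos (by omega)]
        have E4 : ∏ j ∈ Finset.Icc 1 ((n + 1 - (m' + 1)) / 2),
              (q (m' + 1 + j + 1) / q j) ^ dExp (n + 1) (m' + 1 + 2 * j)
            = ∏ i ∈ Finset.range K, (q (m' + (i + 1) + 2) / q (i + 1)) ^ (B i + B (i + 1)) := by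
          rw [cv, show (n + 1 - (m' + 1)) / 2 = K from by omega]
          apply Finset.prod_congr rfl
          intro i hi
          rw [Finset.mem_range] at hi
          rw [show m' + 1 + (i + 1) + 1 = m' + (i + 1) + 2 from by omega]
          congr 1
          by_cases hlast : i + 1 < K
          · rw [show B i = dExp n (m' + 2 * i + 2) from by rw [hBdef]; exact if_pos (by omega),
              show B (i + 1) = dExp n (m' + 2 * (i + 1) + 2) from by
                rw [hBdef]; exact if_pos hlast]
            have hP := dExp_pascal n (m' + 2 * i + 3) (by omega) (by omega) (by omega)
            rw [show m' + 1 + 2 * (i + 1) = m' + 2 * i + 3 from by omega, hP,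
              show m' + 2 * i + 3 - 1 = m' + 2 * i + 2 from by omega,
              show m' + 2 * i + 3 + 1 = m' + 2 * (i + 1) + 2 from by omega]
          · have hi' : i + 1 = K := by omega
            rw [show B i = dExp n (m' + 2 * i + 2) from by rw [hBdef]; exact if_pos (by omega),
              show B (i + 1) = 0 from by rw [hBdef]; exact if_neg (by omega),
              show m' + 2 * i + 2 = n from by omega, dExp_self,
              show m' + 1 + 2 * (i + 1) = n + 1 from by omega, dExp_self]
        rw [E1, E2, E3, E4]
        exact hT

/-- Product-over-walks formula for the Gram determinant of `Δ_n(m)`: the product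
over all nonnegative walks `(h_0,…,h_n)` from `0` to `m` of the factors
`[h_{j−1}+1]/[h_{j−1}]` over down-steps `j` equals
`∏_{j=1}^{(n−m)/2} ([m+j+1]/[j])^{d(n,m+2j)}`. -/
theorem gram_determinant_product_formula (n m : ℕ) (hm : m ≤ n) (hpar : m % 2 = n % 2) :
    (∏ᶠ h ∈ { h : Fin (n + 1) → ℕ |
          h 0 = 0 ∧ h (Fin.last n) = m ∧
          ∀ j : Fin n, h j.succ = h j.castSucc + 1 ∨ h j.castSucc = h j.succ + 1 },
        ∏ j : Fin n,
          if h j.castSucc = h j.succ + 1 then q (h j.castSucc + 1) / q (h j.castSucc)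
          else 1)
      = ∏ j ∈ Finset.Icc 1 ((n - m) / 2), (q (m + j + 1) / q j) ^ dExp n (m + 2 * j) := by
  show (∏ᶠ h ∈ W n m, F n h) = _
  rw [← Set.Finite.coe_toFinset (W_finite n m), finprod_mem_coe_finset]
  exact main_aux n m hm hpar
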